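/- Let q be a prime power with q ≡ 1 (mod 4), d = (q-1)/4, and g a generator of F_q^*. For any integer i with 0 ≤ i ≤ d-1, set a₀ = (g^(2(4i+2)) + 1)/(2g^(4i+2)), a₁ = (g^d + 1)(g^(2(4i+2)) - 1)/(4g^(4i+d+2)), and a₂ = g^d · a₁. Then the polynomial f(x) = a₂x^(3d+1) + a₁x^(d+1) + a₀x induces a bijection of F_q satisfying f(f(x)) = x for all x ∈ F_q. -/

import Mathlib

theorem stmt0 {F : Type*} [Field F] [Fintype F] (q : ℕ)
    (hq : Fintype.card F = q) (hq4 : q % 4 = 1)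
    (d : ℕ) (hd : d = (q - 1) / 4)
    (g : Fˣ) (hg : ∀ x : Fˣ, x ∈ Subgroup.zpowers g)
    (i : ℕ) (hi : i ≤ d - 1)
    (a0 a1 a2 : F)
    (ha0 : a0 = ((g : F) ^ (2 * (4 * i + 2)) + 1) / (2 * (g : F) ^ (4 * i + 2)))
    (ha1 : a1 = (((g : F) ^ d + 1) * ((g : F) ^ (2 * (4 * i + 2)) - 1)) /
      (4 * (g : F) ^ (4 * i + d + 2)))
    (ha2 : a2 = (g : F) ^ d * a1)
    (f : F → F)
    (hf : ∀ x, f x = a2 * x ^ (3 * d + 1) + a1 * x ^ (d + 1) + a0 * x) :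
    Function.Bijective f ∧ ∀ x, f (f x) = x := by
  classical
  have hq2 : 2 ≤ q := hq ▸ Fintype.one_lt_card
  have hq5 : 5 ≤ q := by omega
  have hqd : q - 1 = 4 * d := by omega
  have hd1 : 1 ≤ d := by omega
  have hordg : orderOf g = 4 * d := by
    rw [orderOf_eq_card_of_forall_mem_zpowers hg, Nat.card_eq_fintype_card,
      Fintype.card_units, hq, hqd]
  set G : F := (g : F) with hG
  have hG0 : G ≠ 0 := Units.ne_zero g
  have hGq : G ^ (4 * d) = 1 := by
    have h := pow_orderOf_eq_one g
    rw [hordg] at h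
    have h2 : ((g ^ (4 * d) : Fˣ) : F) = 1 := by rw [h]; simp
    rw [hG]; push_cast at h2 ⊢; exact h2
  set s : F := G ^ d with hsdef
  have hs21 : s ^ 2 ≠ 1 := by
    intro h
    have h1 : g ^ (2 * d) = 1 := by
      have : G ^ (2 * d) = 1 := by rw [show 2*d = d*2 by ring, pow_mul, ← hsdef, h]
      exact Units.ext (by push_cast; exact this)
    have h2 := orderOf_dvd_of_pow_eq_one h1
    rw [hordg] at h2
    have := Nat.le_of_dvd (by omega) h2
    omega
  have hs2 : s ^ 2 = -1 := by
    have h1 : (s ^ 2 - 1) * (s ^ 2 + 1) = 0 := by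
      have h4 : (s ^ 2) ^ 2 = 1 := by
        rw [← pow_mul, hsdef, ← pow_mul, show d * (2 * 2) = 4 * d by ring, hGq]
      linear_combination h4
    rcases mul_eq_zero.1 h1 with h | h
    · exact absurd (sub_eq_zero.1 h) hs21
    · linear_combination h
  have h2F : (2 : F) ≠ 0 := by
    intro h
    exact hs21 (by rw [hs2]; linear_combination -h)
  have h4F : (4 : F) ≠ 0 := by
    rw [show (4 : F) = 2 * 2 by norm_num]
    exact mul_ne_zero h2F h2F
  have hs0 : s ≠ 0 := pow_ne_zero _ hG0
  set w : F := G ^ (4 * i + 2) with hwdef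
  have hw0 : w ≠ 0 := pow_ne_zero _ hG0
  have hwd : w ^ d = -1 := by
    rw [hwdef, ← pow_mul, show (4 * i + 2) * d = 4 * d * i + d * 2 by ring,
      pow_add, pow_mul, hGq, one_pow, one_mul, pow_mul, ← hsdef, hs2]
  have hw2 : G ^ (2 * (4 * i + 2)) = w ^ 2 := by
    rw [hwdef, ← pow_mul, mul_comm]
  have hws : G ^ (4 * i + d + 2) = w * s := by
    rw [hwdef, hsdef, ← pow_add, show 4 * i + 2 + d = 4 * i + d + 2 by ring]
  rw [hw2] at ha0 ha1
  rw [hws] at ha1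
  have hcplus : ∀ t : F, t = 1 ∨ t = s → a2 * t ^ 3 + a1 * t + a0 = w := by
    intro t ht
    rcases ht with ht | ht <;> subst ht <;> rw [ha2, ha1, ha0] <;> field_simp
    · linear_combination (2 * (w ^ 2 - 1)) * hs2
    · linear_combination (2 * (w ^ 2 - 1) * (s ^ 2 + s - 1)) * hs2
  have hcminus : ∀ t : F, t = -1 ∨ t = -s → a2 * t ^ 3 + a1 * t + a0 = w⁻¹ := by
    intro t ht
    rcases ht with ht | ht <;> subst ht <;> rw [ha2, ha1, ha0] <;> field_simp
    · linear_combination (-2 * (w ^ 2 - 1)) * hs2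
    · linear_combination (-2 * (w ^ 2 - 1) * (s ^ 2 + s - 1)) * hs2
  have hfx : ∀ x : F, f x = (a2 * (x ^ d) ^ 3 + a1 * (x ^ d) + a0) * x := by
    intro x
    rw [hf, show 3 * d + 1 = d * 3 + 1 by ring, pow_succ, pow_mul, pow_succ]
    ring
  have hinv : ∀ x : F, f (f x) = x := by
    intro x
    by_cases hx : x = 0
    · have h0 : f 0 = 0 := by rw [hfx]; ring
      rw [hx, h0, h0]
    · have ht4 : (x ^ d) ^ 4 = 1 := by
        rw [← pow_mul, show d * 4 = 4 * d by ring, ← hqd, ← hq,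
          FiniteField.pow_card_sub_one_eq_one x hx]
      have hfac : (x ^ d - 1) * (x ^ d + 1) * (x ^ d - s) * (x ^ d + s) = 0 := by
        linear_combination ht4 + (1 - (x ^ d) ^ 2) * hs2
      have hwinvd : (w⁻¹) ^ d = -1 := by
        rw [inv_pow, hwd]
        norm_num
      rcases mul_eq_zero.1 hfac with hfac | h4
      rcases mul_eq_zero.1 hfac with hfac | h3
      rcases mul_eq_zero.1 hfac with h1 | h2
      · -- x^d = 1
        have ht : x ^ d = 1 := by linear_combination h1
        have e1 : f x = w * x := by rw [hfx, hcplus _ (Or.inl ht)]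
        have e2 : (w * x) ^ d = -1 := by rw [mul_pow, hwd, ht, mul_one]
        have e3 : f (w * x) = w⁻¹ * (w * x) := by rw [hfx, hcminus _ (Or.inl e2)]
        rw [e1, e3, ← mul_assoc, inv_mul_cancel₀ hw0, one_mul]
      · -- x^d = -1
        have ht : x ^ d = -1 := by linear_combination h2
        have e1 : f x = w⁻¹ * x := by rw [hfx, hcminus _ (Or.inl ht)]
        have e2 : (w⁻¹ * x) ^ d = 1 := by rw [mul_pow, hwinvd, ht]; ring
        have e3 : f (w⁻¹ * x) = w * (w⁻¹ * x) := by rw [hfx, hcplus _ (Or.inl e2)]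
        rw [e1, e3, ← mul_assoc, mul_inv_cancel₀ hw0, one_mul]
      · -- x^d = s
        have ht : x ^ d = s := by linear_combination h3
        have e1 : f x = w * x := by rw [hfx, hcplus _ (Or.inr ht)]
        have e2 : (w * x) ^ d = -s := by rw [mul_pow, hwd, ht]; ring
        have e3 : f (w * x) = w⁻¹ * (w * x) := by rw [hfx, hcminus _ (Or.inr e2)]
        rw [e1, e3, ← mul_assoc, inv_mul_cancel₀ hw0, one_mul]
      · -- x^d = -s
        have ht : x ^ d = -s := by linear_combination h4
        have e1 : f x = w⁻¹ * x := by rw [hfx, hcminus _ (Or.inr ht)]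
        have e2 : (w⁻¹ * x) ^ d = s := by rw [mul_pow, hwinvd, ht]; ring
        have e3 : f (w⁻¹ * x) = w * (w⁻¹ * x) := by rw [hfx, hcplus _ (Or.inr e2)]
        rw [e1, e3, ← mul_assoc, mul_inv_cancel₀ hw0, one_mul]
  exact ⟨Function.Involutive.bijective hinv, hinv⟩
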